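/- Let s = (s_1,…,s_n) be a sequence of positive integers and let u = (u_1,…,u_n) = (s_n,…,s_1) be its reverse. For every nonnegative integer t, the number of lattice points λ ∈ ℤ^n with 0 ≤ λ_1/s_1 ≤ ⋯ ≤ λ_n/s_n ≤ t equals the number of lattice points μ ∈ ℤ^n with 0 ≤ μ_1/u_1 ≤ ⋯ ≤ μ_n/u_n ≤ t. (That is, the lecture hall polytopes P_s and P_u have the same Ehrhart polynomial.) -/

import Mathlib

/-- The generator vectors of the s-lecture hall parallelepiped: `lhVec s j` has
`i`-th coordinate `s i` for `i ≥ j` and `0` for `i < j`. -/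
def lhVec {n : ℕ} (s : Fin n → ℕ) (j : Fin n) : Fin n → ℝ :=
  fun i => if j ≤ i then (s i : ℝ) else 0

/-- The s-lecture hall parallelepiped: the half-open parallelepiped generated by
the vectors `lhVec s j`. -/
def lhPar {n : ℕ} (s : Fin n → ℕ) : Set (Fin n → ℝ) :=
  {x | ∃ c : Fin n → ℝ, (∀ j, 0 ≤ c j ∧ c j < 1) ∧ x = ∑ j, c j • lhVec s j}

/-- `lhEll S i` is the number of lattice points of `S ⊆ ℝ^N` whose last coordinate
equals `i`. -/
noncomputable def lhEll {N : ℕ} (S : Set (Fin N → ℝ)) (i : ℕ) : ℕ :=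
  Set.ncard {x : Fin N → ℤ | (fun k => (x k : ℝ)) ∈ S ∧
    ∀ j : Fin N, (j : ℕ) = N - 1 → x j = (i : ℤ)}

/-- The number of s-descents of `r`: indices `i` with `r i / s i > r (i+1) / s (i+1)`. -/
noncomputable def sDes {N : ℕ} (s : Fin N → ℕ) (r : Fin N → ℤ) : ℕ :=
  Set.ncard {i : Fin N | ∃ h : (i : ℕ) + 1 < N,
    (r i : ℚ) / (s i : ℚ) > (r ⟨(i : ℕ) + 1, h⟩ : ℚ) / (s ⟨(i : ℕ) + 1, h⟩ : ℚ)}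

/-- The number of s-ascents of `r`: indices `i` with `r i / s i < r (i+1) / s (i+1)`. -/
noncomputable def sAsc {N : ℕ} (s : Fin N → ℕ) (r : Fin N → ℤ) : ℕ :=
  Set.ncard {i : Fin N | ∃ h : (i : ℕ) + 1 < N,
    (r i : ℚ) / (s i : ℚ) < (r ⟨(i : ℕ) + 1, h⟩ : ℚ) / (s ⟨(i : ℕ) + 1, h⟩ : ℚ)}

/-- The number of (regular) descents of `r`: indices `i` with `r i > r (i+1)`. -/
noncomputable def rDes {N : ℕ} (r : Fin N → ℤ) : ℕ :=
  Set.ncard {i : Fin N | ∃ h : (i : ℕ) + 1 < N, r ⟨(i : ℕ) + 1, h⟩ < r i}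

/-- The number of (regular) ascents of `r`: indices `i` with `r i < r (i+1)`. -/
noncomputable def rAsc {N : ℕ} (r : Fin N → ℤ) : ℕ :=
  Set.ncard {i : Fin N | ∃ h : (i : ℕ) + 1 < N, r i < r ⟨(i : ℕ) + 1, h⟩}

/-- The number of s-descents of `r` at positions strictly before position `i`. -/
noncomputable def sDesLt {N : ℕ} (s : Fin N → ℕ) (r : Fin N → ℤ) (i : Fin N) : ℕ :=
  Set.ncard {j : Fin N | (j : ℕ) < (i : ℕ) ∧ ∃ h : (j : ℕ) + 1 < N,
    (r j : ℚ) / (s j : ℚ) > (r ⟨(j : ℕ) + 1, h⟩ : ℚ) / (s ⟨(j : ℕ) + 1, h⟩ : ℚ)}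

/-- `lhPsi s` is the set `Ψ_n = {0,…,s 0 − 1} × ⋯ × {0,…,s (n-1) − 1}`. -/
def lhPsi {n : ℕ} (s : Fin n → ℕ) : Set (Fin n → ℤ) :=
  {r | ∀ i, 0 ≤ r i ∧ r i < (s i : ℤ)}

/-- `inDilate s t lam` says that the lattice point `lam` satisfies
`0 ≤ lam 0 / s 0 ≤ lam 1 / s 1 ≤ ⋯ ≤ lam (n-1) / s (n-1) ≤ t`,
i.e. lies in the `t`-th dilate of the s-lecture hall polytope. -/
def inDilate {n : ℕ} (s : Fin n → ℕ) (t : ℕ) (lam : Fin n → ℤ) : Prop :=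
  (∀ i : Fin n, (i : ℕ) = 0 → 0 ≤ (lam i : ℚ) / (s i : ℚ)) ∧
  (∀ i : Fin n, ∀ h : (i : ℕ) + 1 < n,
    (lam i : ℚ) / (s i : ℚ) ≤ (lam ⟨(i : ℕ) + 1, h⟩ : ℚ) / (s ⟨(i : ℕ) + 1, h⟩ : ℚ)) ∧
  (∀ i : Fin n, (i : ℕ) = n - 1 → (lam i : ℚ) / (s i : ℚ) ≤ (t : ℚ))

def lhFlip (n t : ℕ) (s : Fin n → ℕ) (lam : Fin n → ℤ) : Fin n → ℤ :=
  fun i => (t : ℤ) * s (Fin.rev i) - lam (Fin.rev i)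

lemma lhFlip_flip (n t : ℕ) (s : Fin n → ℕ) (lam : Fin n → ℤ) :
    lhFlip n t (fun i => s (Fin.rev i)) (lhFlip n t s lam) = lam := by
  funext i
  simp [lhFlip, Fin.rev_rev]

lemma key_div (t : ℕ) (a : ℤ) (m : ℕ) (hm : 0 < m) :
    (((t : ℤ) * m - a : ℤ) : ℚ) / (m : ℚ) = (t : ℚ) - (a : ℚ) / m := by
  have : (m : ℚ) ≠ 0 := by exact_mod_cast hm.ne'
  field_simp
  push_cast
  ring

lemma lhFlip_mem (n t : ℕ) (s : Fin n → ℕ) (hs : ∀ i, 0 < s i) (lam : Fin n → ℤ)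
    (h : inDilate s t lam) : inDilate (fun i => s (Fin.rev i)) t (lhFlip n t s lam) := by
  obtain ⟨h1, h2, h3⟩ := h
  refine ⟨?_, ?_, ?_⟩
  · intro i hi
    have hrev : (Fin.rev i : ℕ) = n - 1 := by
      rw [Fin.val_rev]; omega
    have := h3 (Fin.rev i) hrev
    simp only [lhFlip]
    rw [key_div t _ _ (hs _)]
    linarith
  · intro i hlt
    set j : Fin n := Fin.rev ⟨(i : ℕ) + 1, hlt⟩ with hj
    have hjv : (j : ℕ) = n - ((i : ℕ) + 2) := by rw [hj, Fin.val_rev]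
    have hjlt : (j : ℕ) + 1 < n := by omega
    have hjeq : (⟨(j : ℕ) + 1, hjlt⟩ : Fin n) = Fin.rev i := by
      apply Fin.ext
      show (j : ℕ) + 1 = (Fin.rev i : ℕ)
      have hrv := Fin.val_rev i
      have hrv2 := Fin.val_rev (⟨(i : ℕ) + 1, hlt⟩ : Fin n)
      have hmk : ((⟨(i : ℕ) + 1, hlt⟩ : Fin n) : ℕ) = (i : ℕ) + 1 := rfl
      have := i.isLt
      omega
    have := h2 j hjlt
    rw [hjeq] at this
    simp only [lhFlip]
    rw [key_div t _ _ (hs _), key_div t _ _ (hs _)]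
    have hrr : Fin.rev (Fin.rev (⟨(i : ℕ) + 1, hlt⟩ : Fin n)) = ⟨(i : ℕ) + 1, hlt⟩ :=
      Fin.rev_rev _
    rw [show Fin.rev (⟨(i : ℕ) + 1, hlt⟩ : Fin n) = j from rfl] at *
    linarith
  · intro i hi
    have hrev : (Fin.rev i : ℕ) = 0 := by
      rw [Fin.val_rev]
      have := i.isLt
      omega
    have := h1 (Fin.rev i) hrev
    simp only [lhFlip]
    rw [key_div t _ _ (hs _)]
    linarith

lemma lhFlip_inj (n t : ℕ) (s : Fin n → ℕ) : Function.Injective (lhFlip n t s) := by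
  intro a b hab
  funext i
  have := congrFun hab (Fin.rev i)
  simp only [lhFlip, Fin.rev_rev] at this
  omega


/-- `P_s` and `P_u` (with `u` the reverse of `s`) have the same
number of lattice points in their `t`-th dilates. -/
theorem stmt_14 (n : ℕ) (s : Fin n → ℕ) (hs : ∀ i, 0 < s i) (t : ℕ) :
    Set.ncard {lam : Fin n → ℤ | inDilate s t lam} =
      Set.ncard {mu : Fin n → ℤ | inDilate (fun i => s (Fin.rev i)) t mu} := by
  have hrev : (fun i => (fun j => s (Fin.rev j)) (Fin.rev i)) = s := by
    funext i; simp [Fin.rev_rev]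
  have himg : {mu : Fin n → ℤ | inDilate (fun i => s (Fin.rev i)) t mu} =
      lhFlip n t s '' {lam : Fin n → ℤ | inDilate s t lam} := by
    ext mu
    constructor
    · intro hmu
      refine ⟨lhFlip n t (fun i => s (Fin.rev i)) mu, ?_, ?_⟩
      · have := lhFlip_mem n t (fun i => s (Fin.rev i)) (fun i => hs _) mu hmu
        rwa [hrev] at this
      · have := lhFlip_flip n t (fun i => s (Fin.rev i)) mu
        rwa [hrev] at this
    · rintro ⟨lam, hlam, rfl⟩
      exact lhFlip_mem n t s hs lam hlam
  rw [himg, Set.ncard_image_of_injective _ (lhFlip_inj n t s)]
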